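/- Let 𝓑 be an almost disjoint family of infinite subsets of ω×2 and 𝔅 = [𝓑 ∪ fin(ω×2)] the algebra generated by 𝓑 together with all finite sets. If a set of measures M ⊆ M₁(𝔅) is contained in a free subset of M₁(𝔅), then for every Z ∈ 𝔅 and every ε > 0 there is a simple 𝔅-measurable function g ∈ s(𝔅) such that for every μ ∈ M one has | ⟨μ, g⟩ − |μ(Z)| | < ε. -/

import Mathlib

open scoped ENNReal

/-- `m` is finitely additive on the algebra `𝔄` of subsets of `S`. -/
def FinAddOn {S : Type*} (𝔄 : Set (Set S)) (m : Set S → ℝ) : Prop :=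
  ∀ A ∈ 𝔄, ∀ B ∈ 𝔄, Disjoint A B → m (A ∪ B) = m A + m B

/-- `m` has variation norm `‖m‖ = |m|(S) ≤ 1` on the algebra `𝔄`. -/
def VarLeOne {S : Type*} (𝔄 : Set (Set S)) (m : Set S → ℝ) : Prop :=
  ∀ B ∈ 𝔄, |m B| + |m Bᶜ| ≤ 1

/-- `M₁(P(S))`: the finitely additive measures of norm at most `1` on the full power
set algebra of `S`. -/
def M1full (S : Type*) : Set (Set S → ℝ) :=
  {m | FinAddOn (Set.univ : Set (Set S)) m ∧ VarLeOne (Set.univ : Set (Set S)) m}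

/-- The pair `(M, M')` is `𝔅`-separated: there are `ε > 0` and finitely many sets
`B₁, …, B_n ∈ 𝔅` such that for every `(μ, μ') ∈ M × M'` there is `i ≤ n` with
`|μ(B_i) − μ'(B_i)| ≥ ε`. -/
def SeparatedBy {S : Type*} (𝔅 : Set (Set S)) (M M' : Set (Set S → ℝ)) : Prop :=
  ∃ ε > (0 : ℝ), ∃ n : ℕ, 0 < n ∧ ∃ B : Fin n → Set S, (∀ i, B i ∈ 𝔅) ∧
    ∀ m ∈ M, ∀ m' ∈ M', ∃ i, ε ≤ |m (B i) - m' (B i)|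

/-- The characteristic function of a set `B`, as an element of `ℓ∞`. -/
noncomputable def ind {S : Type*} (B : Set S) : lp (fun _ : S => ℝ) ∞ :=
  ⟨B.indicator (fun _ => (1 : ℝ)), by
    apply memℓp_infty
    refine ⟨1, ?_⟩
    rintro x ⟨s, rfl⟩
    by_cases h : s ∈ B <;> simp [h]⟩

/-- The closure in `ℓ∞(S)` of the space of simple `𝔄`-measurable functions,
i.e. the closed linear span of the characteristic functions of members of `𝔄`. -/
noncomputable def Xsp {S : Type*} (𝔄 : Set (Set S)) : Submodule ℝ (lp (fun _ : S => ℝ) ∞) :=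
  (Submodule.span ℝ (ind '' 𝔄)).topologicalClosure

/-- The characteristic function of `B ∈ 𝔄`, as an element of `X_𝔄`. -/
noncomputable def indX {S : Type*} (𝔄 : Set (Set S)) (B : Set S) (hB : B ∈ 𝔄) : ↥(Xsp 𝔄) :=
  ⟨ind B, Submodule.le_topologicalClosure _ (Submodule.subset_span ⟨B, hB, rfl⟩)⟩

/-- A set `F` of functionals (in the weak* topology) is free if every weak*-continuous
real-valued function on `F` is the evaluation of some element of `X`. -/
def FreeSet {X : Type*} [NormedAddCommGroup X] [NormedSpace ℝ X]
    (F : Set (WeakDual ℝ X)) : Prop :=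
  ∀ f : F → ℝ, Continuous f → ∃ x : X, ∀ φ (hφ : φ ∈ F), f ⟨φ, hφ⟩ = φ x

/-- Membership in the algebra of sets generated by a family `G` of subsets of `S`. -/
inductive genAlgMem {S : Type*} (G : Set (Set S)) : Set S → Prop
  | base {A : Set S} : A ∈ G → genAlgMem G A
  | empty : genAlgMem G ∅
  | compl {A : Set S} : genAlgMem G A → genAlgMem G Aᶜ
  | union {A B : Set S} : genAlgMem G A → genAlgMem G B → genAlgMem G (A ∪ B)

/-- The algebra of subsets of `S` generated by a family `G`. -/
def genAlg {S : Type*} (G : Set (Set S)) : Set (Set S) := {A | genAlgMem G A}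

/-- The underlying countable set `ω × 2`. -/
abbrev S2 : Type := ℕ × Fin 2

set_option maxHeartbeats 1600000 in
set_option synthInstance.maxHeartbeats 400000 in
/-- Let `𝓑` be an almost disjoint family of infinite subsets of `ω × 2` and
`𝔅 = [𝓑 ∪ fin(ω × 2)]`. If a set `M` of measures in `M₁(𝔅)` is contained in a free
subset of `M₁(𝔅)` (measures being identified with functionals on the closure `X_𝔅` of
the simple `𝔅`-measurable functions in `ℓ∞`), then for every `Z ∈ 𝔅` and every `ε > 0`
there is a simple `𝔅`-measurable function `g = Σ r_i·χ_{B_i}` such that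
`| ⟨μ, g⟩ − |μ(Z)| | < ε` for every `μ ∈ M`. -/
theorem statement9 (𝓑 : Set (Set S2)) (hinf : ∀ B ∈ 𝓑, B.Infinite)
    (had : ∀ B ∈ 𝓑, ∀ B' ∈ 𝓑, B ≠ B' → (B ∩ B').Finite)
    (M : Set (Set S2 → ℝ))
    (hM : ∀ m ∈ M, FinAddOn (genAlg (𝓑 ∪ {F : Set S2 | F.Finite})) m ∧
      VarLeOne (genAlg (𝓑 ∪ {F : Set S2 | F.Finite})) m)
    -- `M` is contained in a free subset of `M₁(𝔅)`
    (hfree : ∃ F : Set (WeakDual ℝ ↥(Xsp (genAlg (𝓑 ∪ {F : Set S2 | F.Finite})))),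
      IsClosed F ∧ (∀ φ ∈ F, ‖WeakDual.toStrongDual φ‖ ≤ 1) ∧ FreeSet F ∧
      ∀ m ∈ M, ∃ φ ∈ F, ∀ B (hB : B ∈ genAlg (𝓑 ∪ {F : Set S2 | F.Finite})),
        φ (indX _ B hB) = m B) :
    ∀ Z ∈ genAlg (𝓑 ∪ {F : Set S2 | F.Finite}), ∀ ε > (0 : ℝ),
      ∃ (n : ℕ) (r : Fin n → ℝ) (Bs : Fin n → Set S2),
        (∀ i, Bs i ∈ genAlg (𝓑 ∪ {F : Set S2 | F.Finite})) ∧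
        ∀ m ∈ M, |(∑ i, r i * m (Bs i)) - (|m Z|)| < ε := by
  intro Z hZ ε hε
  set 𝔅 := genAlg (𝓑 ∪ {F : Set S2 | F.Finite}) with h𝔅
  obtain ⟨F, hFcl, hnorm, hFfree, hrep⟩ := hfree
  -- the function φ ↦ |φ(χ_Z)| is weak*-continuous on F
  have hcont : Continuous fun p : F => |(p : WeakDual ℝ ↥(Xsp 𝔅)) (indX 𝔅 Z hZ)| :=
    continuous_abs.comp ((WeakDual.eval_continuous (indX 𝔅 Z hZ)).comp continuous_subtype_val)
  obtain ⟨x, hx⟩ := hFfree _ hcont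
  -- approximate x by an element of the span
  have hxmem : (x : lp (fun _ : S2 => ℝ) ∞) ∈
      closure (Submodule.span ℝ (ind '' 𝔅) : Set (lp (fun _ : S2 => ℝ) ∞)) := x.2
  obtain ⟨y, hy_span, hy_close⟩ := Metric.mem_closure_iff.mp hxmem ε hε
  obtain ⟨n, r, g, hg⟩ := Submodule.mem_span_set'.mp hy_span
  have hBs : ∀ i, ∃ B ∈ 𝔅, ind B = (g i : lp (fun _ : S2 => ℝ) ∞) := by
    intro i
    obtain ⟨B, hB, hB'⟩ := (g i).2
    exact ⟨B, hB, hB'⟩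
  choose Bs hBsmem hBsind using hBs
  refine ⟨n, r, Bs, hBsmem, ?_⟩
  intro m hm
  obtain ⟨φ, hφF, hφrep⟩ := hrep m hm
  -- the element of Xsp corresponding to the simple function
  set Y : ↥(Xsp 𝔅) := ∑ i, r i • indX 𝔅 (Bs i) (hBsmem i) with hY
  have hYcoe : (Y : lp (fun _ : S2 => ℝ) ∞) = y := by
    rw [hY]
    push_cast
    rw [← hg]
    exact Finset.sum_congr rfl fun i _ => by rw [← hBsind i]; rfl
  have hsum : (∑ i, r i * m (Bs i)) = φ Y := by
    rw [hY, map_sum]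
    exact Finset.sum_congr rfl fun i _ => by
      rw [map_smul, hφrep (Bs i) (hBsmem i)]; rfl
  have habs : |m Z| = φ x := by
    rw [← hφrep Z hZ]
    exact hx φ hφF
  rw [hsum, habs, ← map_sub]
  have h1 : |φ (Y - x)| ≤ ‖WeakDual.toStrongDual φ‖ * ‖Y - x‖ :=
    (WeakDual.toStrongDual φ).le_opNorm (Y - x)
  have h2 : ‖Y - x‖ = dist (x : lp (fun _ : S2 => ℝ) ∞) y := by
    rw [dist_eq_norm, ← hYcoe]
    rw [show (x : lp (fun _ : S2 => ℝ) ∞) - (Y : lp (fun _ : S2 => ℝ) ∞)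
        = ((x - Y : ↥(Xsp 𝔅)) : lp (fun _ : S2 => ℝ) ∞) from rfl, ← norm_neg]
    simp [norm_sub_rev]
  calc |φ (Y - x)| ≤ ‖WeakDual.toStrongDual φ‖ * ‖Y - x‖ := h1
    _ ≤ 1 * ‖Y - x‖ := by
        apply mul_le_mul_of_nonneg_right (hnorm φ hφF) (norm_nonneg _)
    _ = ‖Y - x‖ := one_mul _
    _ < ε := by rw [h2]; exact hy_close
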